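/- If three non-overlapping unit balls X, Y, Z in ℝ³ admit two line transversals, one in the order X, Y, Z and another in the order X, Z, Y, then the triangle of centers x y z is acute and dist(y, z) < 2√2. -/

import Mathlib

open Real EuclideanGeometry

open scoped RealInnerProductSpace

section Aux
variable {E : Type*} [NormedAddCommGroup E] [InnerProductSpace ℝ E]

private lemma inner_self_one {v : E} (hv : ‖v‖ = 1) : ⟪v, v⟫ = 1 := by
  rw [real_inner_self_eq_norm_sq, hv]; norm_num

private lemma pyth_decomp (v : E) (hv : ‖v‖ = 1) (u : E) :
    ‖u‖ ^ 2 = ⟪u, v⟫ ^ 2 + ‖u - ⟪u, v⟫ • v‖ ^ 2 := by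
  have h := norm_sub_sq_real u (⟪u, v⟫ • v)
  have h2 : ⟪u, ⟪u, v⟫ • v⟫ = ⟪u, v⟫ ^ 2 := by
    rw [real_inner_smul_right]; ring
  have h3 : ‖⟪u, v⟫ • v‖ ^ 2 = ⟪u, v⟫ ^ 2 := by
    rw [norm_smul, hv, Real.norm_eq_abs, mul_one, sq_abs]
  rw [h2, h3] at h
  linarith

private lemma perp_norm_le (v : E) (hv : ‖v‖ = 1) (u : E) :
    ‖u - ⟪u, v⟫ • v‖ ≤ ‖u‖ := by
  have h := pyth_decomp v hv u
  nlinarith [norm_nonneg (u - ⟪u, v⟫ • v), norm_nonneg u, sq_nonneg ⟪u, v⟫]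

private lemma inner_decomp (v : E) (hv : ‖v‖ = 1) (u₁ u₂ : E) :
    ⟪u₁, u₂⟫ = ⟪u₁, v⟫ * ⟪u₂, v⟫ +
      ⟪u₁ - ⟪u₁, v⟫ • v, u₂ - ⟪u₂, v⟫ • v⟫ := by
  simp only [inner_sub_left, inner_sub_right, real_inner_smul_left, real_inner_smul_right,
    inner_self_one hv]
  rw [real_inner_comm v u₂]
  ring

/-- perp component of `c - p` relative to a unit direction has norm ≤ 1 when the line
through `p` with direction `v` comes within distance 1 of `c`. -/
private lemma perp_le_one (v : E) (hv : ‖v‖ = 1) (p c : E) (t : ℝ)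
    (h : dist (p + t • v) c ≤ 1) :
    ‖(c - p) - ⟪c - p, v⟫ • v‖ ≤ 1 := by
  have hr : ‖c - (p + t • v)‖ ≤ 1 := by
    rw [dist_eq_norm, norm_sub_rev] at h; exact h
  have ht : ⟪c - (p + t • v), v⟫ = ⟪c - p, v⟫ - t := by
    simp only [inner_sub_left, inner_add_left, real_inner_smul_left, inner_self_one hv]
    ring
  have key : (c - p) - ⟪c - p, v⟫ • v
      = (c - (p + t • v)) - ⟪c - (p + t • v), v⟫ • v := by
    rw [ht]; module
  rw [key]
  exact le_trans (perp_norm_le v hv _) hr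

/-- The perp components subtract. -/
private lemma perp_sub (v : E) (p c₁ c₂ : E) :
    ((c₂ - p) - ⟪c₂ - p, v⟫ • v) - ((c₁ - p) - ⟪c₁ - p, v⟫ • v)
      = (c₂ - c₁) - ⟪c₂ - c₁, v⟫ • v := by
  have h : ⟪c₂ - c₁, v⟫ = ⟪c₂ - p, v⟫ - ⟪c₁ - p, v⟫ := by
    simp only [inner_sub_left]; ring
  rw [h]; module

/-- Pair lemma: two unit balls met by a line. -/
private lemma pair_ineq (v : E) (hv : ‖v‖ = 1) (p c₁ c₂ : E) (t₁ t₂ : ℝ)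
    (h₁ : dist (p + t₁ • v) c₁ ≤ 1) (h₂ : dist (p + t₂ • v) c₂ ≤ 1) :
    dist c₁ c₂ ^ 2 - 4 ≤ ⟪c₂ - c₁, v⟫ ^ 2 := by
  have g₁ := perp_le_one v hv p c₁ t₁ h₁
  have g₂ := perp_le_one v hv p c₂ t₂ h₂
  have hsub := perp_sub v p c₁ c₂
  have hP : ‖(c₂ - c₁) - ⟪c₂ - c₁, v⟫ • v‖ ≤ 2 := by
    rw [← hsub]
    calc ‖_ - _‖ ≤ _ := norm_sub_le _ _
    _ ≤ 2 := by linarith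
  have hpy := pyth_decomp v hv (c₂ - c₁)
  have hd : dist c₁ c₂ = ‖c₂ - c₁‖ := by rw [dist_eq_norm, norm_sub_rev]
  rw [hd]
  nlinarith [norm_nonneg ((c₂ - c₁) - ⟪c₂ - c₁, v⟫ • v)]

/-- Scalar core of `last_acute`. -/
private lemma last_acute_scalar (T1 T2 m n1 n2 n3 I J : ℝ)
    (hT2 : 0 < T2) (hT1 : T2 < T1)
    (hd4 : 4 ≤ T2 ^ 2 + m ^ 2)
    (hJ : -(n1 * m) ≤ J)
    (hI : I = J - (n2 ^ 2 - n3 ^ 2 - m ^ 2) / 2)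
    (hm : m ≤ n2 + n3) (hm0 : 0 ≤ m)
    (hn1 : 0 ≤ n1) (hn1' : n1 ≤ 1)
    (hn2 : 0 ≤ n2) (hn2' : n2 ≤ 1)
    (hn3 : 0 ≤ n3) (hn3' : n3 ≤ 1) :
    0 < T1 * T2 + I := by
  have hpos : 0 < (T1 - T2) * T2 := mul_pos (by linarith) hT2
  have hn1m : -(n1 * m) ≥ -m := by nlinarith [mul_nonneg (by linarith : (0:ℝ) ≤ 1 - n1) hm0]
  rcases le_or_gt m 1 with hcase | hcase
  · nlinarith [sq_nonneg n3, sq_nonneg m]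
  · have h5 : m - 1 ≤ n3 := by linarith
    have h6 : (m - 1) * (m - 1) ≤ n3 * n3 :=
      mul_self_le_mul_self (by linarith) h5
    nlinarith [h6]

/-- The angle at the last ball of a transversal is acute. -/
private lemma last_acute (w : E) (hw : ‖w‖ = 1) (q c₁ c₂ c₃ : E)
    (h₁ : ∃ t : ℝ, dist (q + t • w) c₁ ≤ 1)
    (h₂ : ∃ t : ℝ, dist (q + t • w) c₂ ≤ 1)
    (h₃ : ∃ t : ℝ, dist (q + t • w) c₃ ≤ 1)
    (hd : 2 ≤ dist c₂ c₃)
    (ho1 : ⟪c₁, w⟫ < ⟪c₂, w⟫) (ho2 : ⟪c₂, w⟫ < ⟪c₃, w⟫) :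
    0 < ⟪c₁ - c₃, c₂ - c₃⟫ := by
  obtain ⟨t₁, h₁⟩ := h₁
  obtain ⟨t₂, h₂⟩ := h₂
  obtain ⟨t₃, h₃⟩ := h₃
  set g₁ := (c₁ - q) - ⟪c₁ - q, w⟫ • w with hg₁
  set g₂ := (c₂ - q) - ⟪c₂ - q, w⟫ • w with hg₂
  set g₃ := (c₃ - q) - ⟪c₃ - q, w⟫ • w with hg₃
  have n₁ : ‖g₁‖ ≤ 1 := perp_le_one w hw q c₁ t₁ h₁
  have n₂ : ‖g₂‖ ≤ 1 := perp_le_one w hw q c₂ t₂ h₂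
  have n₃ : ‖g₃‖ ≤ 1 := perp_le_one w hw q c₃ t₃ h₃
  -- inner products along w
  have e13 : ⟪c₁ - c₃, w⟫ = ⟪c₁, w⟫ - ⟪c₃, w⟫ := by
    simp only [inner_sub_left]
  have e23 : ⟪c₂ - c₃, w⟫ = ⟪c₂, w⟫ - ⟪c₃, w⟫ := by
    simp only [inner_sub_left]
  -- decomposition of the target inner product
  have hdec := inner_decomp w hw (c₁ - c₃) (c₂ - c₃)
  have hp13 : (c₁ - c₃) - ⟪c₁ - c₃, w⟫ • w = g₁ - g₃ := (perp_sub w q c₃ c₁).symm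
  have hp23 : (c₂ - c₃) - ⟪c₂ - c₃, w⟫ • w = g₂ - g₃ := (perp_sub w q c₃ c₂).symm
  rw [hp13, hp23] at hdec
  -- Pythagoras for c₂ c₃
  have hpy := pyth_decomp w hw (c₃ - c₂)
  have hp32 : (c₃ - c₂) - ⟪c₃ - c₂, w⟫ • w = g₃ - g₂ := (perp_sub w q c₂ c₃).symm
  rw [hp32] at hpy
  have hdist : dist c₂ c₃ = ‖c₃ - c₂‖ := by rw [dist_eq_norm, norm_sub_rev]
  have e32 : ⟪c₃ - c₂, w⟫ = ⟪c₃, w⟫ - ⟪c₂, w⟫ := by simp only [inner_sub_left]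
  -- scalar quantities
  set m := ‖g₂ - g₃‖ with hm
  have hm32 : ‖g₃ - g₂‖ = m := norm_sub_rev _ _
  have hd4 : 4 ≤ (⟪c₃, w⟫ - ⟪c₂, w⟫) ^ 2 + m ^ 2 := by
    rw [← e32, ← hm32]
    rw [hdist] at hd
    nlinarith [hpy]
  -- bounds on the perp inner product
  have hI1 : -(‖g₁‖ * m) ≤ ⟪g₁, g₂ - g₃⟫ := by
    have := abs_real_inner_le_norm g₁ (g₂ - g₃)
    rw [← hm] at this
    nlinarith [abs_nonneg (⟪g₁, g₂ - g₃⟫), neg_abs_le (⟪g₁, g₂ - g₃⟫)]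
  have hI2 : ⟪g₃, g₂ - g₃⟫ = (‖g₂‖ ^ 2 - ‖g₃‖ ^ 2 - m ^ 2) / 2 := by
    have h := norm_sub_sq_real g₂ g₃
    rw [← hm] at h
    have hc : ⟪g₃, g₂⟫ = ⟪g₂, g₃⟫ := real_inner_comm _ _
    simp only [inner_sub_right, real_inner_self_eq_norm_sq]
    linarith
  have hIfull : ⟪g₁ - g₃, g₂ - g₃⟫ = ⟪g₁, g₂ - g₃⟫ - ⟪g₃, g₂ - g₃⟫ := by
    simp only [inner_sub_left]
  have htm : m ≤ ‖g₂‖ + ‖g₃‖ := norm_sub_le _ _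
  have hm0 : 0 ≤ m := norm_nonneg _
  have hn10 : 0 ≤ ‖g₁‖ := norm_nonneg _
  have hn20 : 0 ≤ ‖g₂‖ := norm_nonneg _
  have hn30 : 0 ≤ ‖g₃‖ := norm_nonneg _
  rw [hdec, e13, e23]
  have hIval : ⟪g₁ - g₃, g₂ - g₃⟫
      = ⟪g₁, g₂ - g₃⟫ - (‖g₂‖ ^ 2 - ‖g₃‖ ^ 2 - m ^ 2) / 2 := by
    rw [hIfull, hI2]
  have hEq : (⟪c₁, w⟫ - ⟪c₃, w⟫) * (⟪c₂, w⟫ - ⟪c₃, w⟫)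
      = (⟪c₃, w⟫ - ⟪c₁, w⟫) * (⟪c₃, w⟫ - ⟪c₂, w⟫) := by ring
  have hd4' : 4 ≤ (⟪c₃, w⟫ - ⟪c₂, w⟫) ^ 2 + m ^ 2 := hd4
  rw [hEq]
  exact last_acute_scalar (⟪c₃, w⟫ - ⟪c₁, w⟫) (⟪c₃, w⟫ - ⟪c₂, w⟫) m ‖g₁‖ ‖g₂‖ ‖g₃‖
    _ _ (by linarith) (by linarith) hd4' hI1 hIval htm hm0 hn10 n₁ hn20 n₂ hn30 n₃

/-- Scalar core of the distance bound. -/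
private lemma core_scalar (d ρ qq A B : ℝ) (hd8 : 8 ≤ d ^ 2) (hd0 : 0 < d)
    (hq : d / 2 ≤ qq) (hA : 0 < A) (hA2 : qq ^ 2 + ρ ^ 2 - 4 ≤ A ^ 2)
    (hB : 0 < B) (hB2 : d ^ 2 - 4 ≤ B ^ 2)
    (hρ : 0 ≤ ρ) (hkey : d * A + qq * B ≤ 2 * ρ) : False := by
  have hq0 : 0 < qq := lt_of_lt_of_le (by positivity) hq
  have hδ2 : 2 ≤ B := by nlinarith
  have h1 : d * A ≤ 2 * ρ - qq * B := by linarith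
  have hdA : 0 < d * A := mul_pos hd0 hA
  have h2 : d ^ 2 * (qq ^ 2 + ρ ^ 2 - 4) ≤ (2 * ρ - qq * B) ^ 2 := by
    nlinarith [sq_nonneg d]
  have h3 : qq * B < 2 * ρ := by linarith
  have hqB : 0 < qq * B := mul_pos hq0 hB
  -- ρ > qq*B/2
  have e2 : (qq * B / 2) ^ 2 * (d ^ 2 - 4) < ρ ^ 2 * (d ^ 2 - 4) := by
    have : (qq * B / 2) ^ 2 < ρ ^ 2 := by nlinarith
    have h4 : (0:ℝ) < d ^ 2 - 4 := by nlinarith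
    nlinarith
  have e3 : 2 * (qq * B) * (qq * B) < 4 * ρ * (qq * B) := by nlinarith
  -- combine
  nlinarith [e2, e3, h2, mul_le_mul_of_nonneg_left hB2 (le_of_lt (mul_pos hq0 hq0)),
    mul_le_mul_of_nonneg_left hq (le_of_lt hd0), sq_nonneg (qq * B), sq_nonneg d,
    mul_le_mul hq hq (by positivity) (le_of_lt hq0), hd8, sq_nonneg (d*d - 8)]

end Aux

section Side
variable {E : Type*} [NormedAddCommGroup E] [InnerProductSpace ℝ E]

private lemma sq_le_of_le {a b : ℝ} (ha : 0 ≤ a) (hb : 0 ≤ b) (h : a ^ 2 ≤ b ^ 2) : a ≤ b := by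
  nlinarith

/-- Core contradiction: `dist c₁ c₂ ≥ 2√2` is impossible when the projection of `x`
onto the segment direction is on the `c₂` side, given a transversal in order `x, c₂, c₁`. -/
private lemma side_contra (w : E) (hw : ‖w‖ = 1) (q c₁ c₂ x : E)
    (hd2 : 2 ≤ dist c₁ c₂) (h8 : 8 ≤ dist c₁ c₂ ^ 2) (hxc : 2 ≤ dist x c₂)
    (hx : ∃ t : ℝ, dist (q + t • w) x ≤ 1)
    (h1 : ∃ t : ℝ, dist (q + t • w) c₁ ≤ 1)
    (h2 : ∃ t : ℝ, dist (q + t • w) c₂ ≤ 1)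
    (ho1 : ⟪x, w⟫ < ⟪c₂, w⟫) (ho2 : ⟪c₂, w⟫ < ⟪c₁, w⟫)
    (hside : dist c₁ c₂ ^ 2 ≤ 2 * ⟪c₂ - x, c₂ - c₁⟫) : False := by
  obtain ⟨tx, hx⟩ := hx
  obtain ⟨t₁, h1⟩ := h1
  obtain ⟨t₂, h2⟩ := h2
  obtain ⟨d, hd⟩ : ∃ d : ℝ, d = dist c₁ c₂ := ⟨_, rfl⟩
  have hd0 : 0 < d := by rw [hd]; linarith
  have h8' : 8 ≤ d ^ 2 := by rw [hd]; exact h8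
  have hnorm : ‖c₂ - c₁‖ = d := by rw [hd, dist_eq_norm, norm_sub_rev]
  obtain ⟨u, hu_def⟩ : ∃ u : E, u = d⁻¹ • (c₂ - c₁) := ⟨_, rfl⟩
  have hu : ‖u‖ = 1 := by
    rw [hu_def, norm_smul, hnorm, Real.norm_eq_abs, abs_inv, abs_of_pos hd0]
    field_simp
  obtain ⟨qq, hqq⟩ : ∃ r : ℝ, r = ⟪c₂ - x, u⟫ := ⟨_, rfl⟩
  have hq : d / 2 ≤ qq := by
    have hs2 : d ^ 2 ≤ 2 * ⟪c₂ - x, c₂ - c₁⟫ := by rw [hd]; exact hside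
    have hmid : d * (d / 2) ≤ ⟪c₂ - x, c₂ - c₁⟫ := by nlinarith
    rw [hqq, hu_def, real_inner_smul_right]
    calc d / 2 = d⁻¹ * (d * (d / 2)) := by field_simp
    _ ≤ d⁻¹ * ⟪c₂ - x, c₂ - c₁⟫ :=
        mul_le_mul_of_nonneg_left hmid (by positivity)
  obtain ⟨h, hh_def⟩ : ∃ h : E, h = (x - c₂) + qq • u := ⟨_, rfl⟩
  have hxc2 : ⟪x - c₂, u⟫ = -qq := by
    have e : (⟪x - c₂, u⟫ : ℝ) = -⟪c₂ - x, u⟫ := by rw [← inner_neg_left, neg_sub]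
    rw [e, hqq]
  have hhu : ⟪h, u⟫ = 0 := by
    rw [hh_def, inner_add_left, real_inner_smul_left, inner_self_one hu, hxc2]
    ring
  obtain ⟨ρ, hρ_def⟩ : ∃ r : ℝ, r = ‖h‖ := ⟨_, rfl⟩
  have hρ0 : 0 ≤ ρ := hρ_def ▸ norm_nonneg _
  have hperp : (x - c₂) - ⟪x - c₂, u⟫ • u = h := by
    rw [hxc2, hh_def]; module
  have hpyth : dist x c₂ ^ 2 = qq ^ 2 + ρ ^ 2 := by
    have hp := pyth_decomp u hu (x - c₂)
    rw [hperp, hxc2, ← hρ_def] at hp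
    rw [dist_eq_norm, hp]
    ring
  obtain ⟨δ, hδ_def⟩ : ∃ r : ℝ, r = ⟪c₁ - c₂, w⟫ := ⟨_, rfl⟩
  obtain ⟨γ, hγ_def⟩ : ∃ r : ℝ, r = ⟪c₂ - x, w⟫ := ⟨_, rfl⟩
  have hδ0 : 0 < δ := by rw [hδ_def, inner_sub_left]; linarith
  have hγ0 : 0 < γ := by rw [hγ_def, inner_sub_left]; linarith
  have hδ2 : d ^ 2 - 4 ≤ δ ^ 2 := by
    have hp := pair_ineq w hw q c₂ c₁ t₂ t₁ h2 h1
    rw [dist_comm c₂ c₁, ← hd, ← hδ_def] at hp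
    exact hp
  have hγ2 : qq ^ 2 + ρ ^ 2 - 4 ≤ γ ^ 2 := by
    have hp := pair_ineq w hw q x c₂ tx t₂ hx h2
    rw [hpyth, ← hγ_def] at hp
    exact hp
  have huw : ⟪u, w⟫ = -δ / d := by
    rw [hu_def, real_inner_smul_left]
    have e : (⟪c₂ - c₁, w⟫ : ℝ) = -δ := by rw [hδ_def, ← inner_neg_left, neg_sub]
    rw [e, inv_mul_eq_div, neg_div]
  have hγval : γ = qq * (-δ / d) - ⟪h, w⟫ := by
    have hc2x : c₂ - x = qq • u - h := by rw [hh_def]; module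
    rw [hγ_def, hc2x, inner_sub_left, real_inner_smul_left, huw]
  have hsplit : ⟪h, w⟫ = ⟪h, w + (δ / d) • u⟫ := by
    rw [inner_add_right, real_inner_smul_right, hhu]
    ring
  have hnormw : ‖w + (δ / d) • u‖ ^ 2 = 1 - δ ^ 2 / d ^ 2 := by
    have hads := norm_add_sq_real w ((δ / d) • u)
    rw [real_inner_smul_right, real_inner_comm u w, huw, norm_smul, hu, hw] at hads
    rw [hads, Real.norm_eq_abs, mul_one, sq_abs, one_pow]
    field_simp
    ring
  have hle : ‖w + (δ / d) • u‖ ≤ 2 / d := by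
    apply sq_le_of_le (norm_nonneg _) (by positivity)
    rw [hnormw, div_pow, le_div_iff₀ (by positivity : (0:ℝ) < d ^ 2)]
    have key : (1 - δ ^ 2 / d ^ 2) * d ^ 2 = d ^ 2 - δ ^ 2 := by
      field_simp
    rw [key]
    nlinarith [hδ2]
  have hcs := abs_real_inner_le_norm h (w + (δ / d) • u)
  have h5 : ‖h‖ * ‖w + (δ / d) • u‖ ≤ ρ * (2 / d) := by
    rw [← hρ_def]
    exact mul_le_mul_of_nonneg_left hle hρ0
  have hperpw : -(ρ * (2 / d)) ≤ ⟪h, w⟫ := by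
    rw [hsplit]
    have := neg_abs_le (⟪h, w + (δ / d) • u⟫ : ℝ)
    linarith
  have hkey : d * γ + qq * δ ≤ 2 * ρ := by
    have hγle : γ ≤ qq * (-δ / d) + ρ * (2 / d) := by
      rw [hγval]; linarith
    have hmul := mul_le_mul_of_nonneg_left hγle (le_of_lt hd0)
    have e1 : d * (qq * (-δ / d) + ρ * (2 / d)) = -(qq * δ) + 2 * ρ := by
      field_simp
    rw [e1] at hmul
    linarith
  exact core_scalar d ρ qq γ δ h8' hd0 hq hγ0 hγ2 hδ0 hδ2 hρ0 hkey

end Side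

private lemma angle_lt_of_inner_pos {V : Type*} [NormedAddCommGroup V] [InnerProductSpace ℝ V]
    {a b : V} (h : 0 < ⟪a, b⟫) : InnerProductGeometry.angle a b < π / 2 := by
  rw [InnerProductGeometry.angle, Real.arccos_lt_pi_div_two]
  have ha : a ≠ 0 := by rintro rfl; simp at h
  have hb : b ≠ 0 := by rintro rfl; simp at h
  exact div_pos h (mul_pos (norm_pos_iff.2 ha) (norm_pos_iff.2 hb))

/-- if three non-overlapping unit balls in `ℝ³` admit line transversals in
the orders `X Y Z` and `X Z Y`, then the triangle of centers is acute and
`dist y z < 2√2`. -/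
theorem acute_triangle_of_two_transversals (x y z : EuclideanSpace ℝ (Fin 3))
    (hxy : 2 ≤ dist x y) (hxz : 2 ≤ dist x z) (hyz : 2 ≤ dist y z)
    (p v : EuclideanSpace ℝ (Fin 3)) (hv : ‖v‖ = 1)
    (hX : ∃ t : ℝ, dist (p + t • v) x ≤ 1)
    (hY : ∃ t : ℝ, dist (p + t • v) y ≤ 1)
    (hZ : ∃ t : ℝ, dist (p + t • v) z ≤ 1)
    (hord1 : (inner ℝ x v : ℝ) < inner ℝ y v)
    (hord2 : (inner ℝ y v : ℝ) < inner ℝ z v)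
    (q w : EuclideanSpace ℝ (Fin 3)) (hw : ‖w‖ = 1)
    (hX' : ∃ t : ℝ, dist (q + t • w) x ≤ 1)
    (hY' : ∃ t : ℝ, dist (q + t • w) y ≤ 1)
    (hZ' : ∃ t : ℝ, dist (q + t • w) z ≤ 1)
    (hord1' : (inner ℝ x w : ℝ) < inner ℝ z w)
    (hord2' : (inner ℝ z w : ℝ) < inner ℝ y w) :
    (∠ y x z < π / 2 ∧ ∠ x y z < π / 2 ∧ ∠ x z y < π / 2) ∧
      dist y z < 2 * Real.sqrt 2 := by
  -- Step 1 : dist y z ^ 2 < 8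
  have hd8 : dist y z ^ 2 < 8 := by
    by_contra hcon
    push_neg at hcon
    have hsum : (⟪y - x, y - z⟫ : ℝ) + ⟪z - x, z - y⟫ = dist y z ^ 2 := by
      have e1 : (⟪z - x, z - y⟫ : ℝ) = -⟪z - x, y - z⟫ := by
        rw [← inner_neg_right, neg_sub]
      have e2 : (⟪y - x, y - z⟫ : ℝ) - ⟪z - x, y - z⟫ = ⟪(y - x) - (z - x), y - z⟫ := by
        simp only [inner_sub_left]
      have e3 : (y - x) - (z - x) = y - z := by abel
      rw [e1, ← sub_eq_add_neg, e2, e3, real_inner_self_eq_norm_sq, dist_eq_norm]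
    rcases le_total (dist y z ^ 2) (2 * ⟪z - x, z - y⟫) with hside | hside
    · exact side_contra w hw q y z x hyz hcon hxz hX' hY' hZ' hord1' hord2' hside
    · have hside' : dist z y ^ 2 ≤ 2 * ⟪y - x, y - z⟫ := by
        rw [dist_comm z y]
        linarith
      have hzy : 2 ≤ dist z y := by rwa [dist_comm]
      have hcon' : 8 ≤ dist z y ^ 2 := by rwa [dist_comm]
      exact side_contra v hv p z y x hzy hcon' hxy hX hZ hY hord1 hord2 hside'
  refine ⟨⟨?_, ?_, ?_⟩, ?_⟩
  · -- angle at x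
    have hpos : (0:ℝ) < ⟪y - x, z - x⟫ := by
      have hkey := norm_sub_sq_real (y - x) (z - x)
      have e3 : (y - x) - (z - x) = y - z := by abel
      rw [e3] at hkey
      have h1 : ‖y - x‖ = dist x y := by rw [dist_eq_norm, norm_sub_rev]
      have h2 : ‖z - x‖ = dist x z := by rw [dist_eq_norm, norm_sub_rev]
      have h3 : ‖y - z‖ = dist y z := by rw [dist_eq_norm]
      rw [h1, h2, h3] at hkey
      nlinarith
    have : ∠ y x z = InnerProductGeometry.angle (y - x) (z - x) := by
      rw [EuclideanGeometry.angle]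
      norm_num [vsub_eq_sub]
    rw [this]
    exact angle_lt_of_inner_pos hpos
  · -- angle at y
    have hzy : 2 ≤ dist z y := by rwa [dist_comm]
    have hpos : (0:ℝ) < ⟪x - y, z - y⟫ :=
      last_acute w hw q x z y hX' hZ' hY' hzy hord1' hord2'
    have : ∠ x y z = InnerProductGeometry.angle (x - y) (z - y) := by
      rw [EuclideanGeometry.angle]
      norm_num [vsub_eq_sub]
    rw [this]
    exact angle_lt_of_inner_pos hpos
  · -- angle at z
    have hpos : (0:ℝ) < ⟪x - z, y - z⟫ :=
      last_acute v hv p x y z hX hY hZ hyz hord1 hord2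
    have : ∠ x z y = InnerProductGeometry.angle (x - z) (y - z) := by
      rw [EuclideanGeometry.angle]
      norm_num [vsub_eq_sub]
    rw [this]
    exact angle_lt_of_inner_pos hpos
  · -- distance bound
    have hs : (2 * Real.sqrt 2) ^ 2 = 8 := by
      rw [mul_pow, Real.sq_sqrt] <;> norm_num
    nlinarith [dist_nonneg (x := y) (y := z), Real.sqrt_nonneg 2, hs, hd8]
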